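/- arXiv:1307.6808 — 3 statements merged into one kernel-verified Lean document; each statement's English description precedes it below -/
import Mathlib

section
/- Let n, n', n'' be positive integers and let c ∈ ℂ^n, c' ∈ ℂ^{n'}, c'' ∈ ℂ^{n''} be tuples of complex parameters. Then for all u, v ∈ ℂ the fused operators satisfy the Yang–Baxter equation on V^{⊗n} ⊗ V^{⊗n'} ⊗ V^{⊗n''}: R_{c,c'}(u) · R_{c,c''}(u+v) · R_{c',c''}(v) = R_{c',c''}(v) · R_{c,c''}(u+v) · R_{c,c'}(u), where R_{c,c'}(u) acts on the first two blocks and identically on the third, R_{c,c''}(u+v) acts on the first and third blocks and identically on the second, and R_{c',c''}(v) acts on the last two blocks and identically on the first. -/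
/-!
We model the finite-dimensional complex vector space `V` as `ℂ^N` (i.e. `Fin N → ℂ`),
so that `V^{⊗ n}` is `(Fin n → Fin N) → ℂ` and endomorphisms of `V^{⊗ n}` are matrices
indexed by multi-indices `Fin n → Fin N`.
-/

open scoped BigOperators

noncomputable section

/-- Endomorphisms of `V ⊗ V` for `V = ℂ^N`. -/
abbrev End2 (N : ℕ) := Matrix (Fin N × Fin N) (Fin N × Fin N) ℂ

/-- Endomorphisms of `V^{⊗ n}` for `V = ℂ^N`. -/
abbrev EndT (N n : ℕ) := Matrix (Fin n → Fin N) (Fin n → Fin N) ℂ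

/-- `X_{a,b}` : the endomorphism `X` of `V ⊗ V` applied to the tensor factors `a` and `b`
(in that order) of `V^{⊗ n}`, and the identity on all other factors. -/
def op2 (N n : ℕ) (X : End2 N) (a b : Fin n) : EndT N n :=
  fun f g => X (f a, f b) (g a, g b) *
    ∏ i : Fin n, if i ≠ a ∧ i ≠ b then (if f i = g i then (1 : ℂ) else 0) else 1

/-- The flip (permutation) operator `P : x ⊗ y ↦ y ⊗ x` on `V ⊗ V`. -/
def flipMat (N : ℕ) : End2 N := fun p q => if p.1 = q.2 ∧ p.2 = q.1 then 1 else 0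

/-- `R` is a solution of the Yang--Baxter equation (with additive spectral parameters)
on `V ⊗ V ⊗ V`:  `R₁₂(u) R₁₃(u+v) R₂₃(v) = R₂₃(v) R₁₃(u+v) R₁₂(u)`. -/
def YangBaxter (N : ℕ) (R : ℂ → End2 N) : Prop :=
  ∀ u v : ℂ,
    op2 N 3 (R u) 0 1 * op2 N 3 (R (u + v)) 0 2 * op2 N 3 (R v) 1 2 =
    op2 N 3 (R v) 1 2 * op2 N 3 (R (u + v)) 0 2 * op2 N 3 (R u) 0 1

/-- The fused operator `R_{c,c'}(u)`, acting on `V^{⊗ m}`, where the `n` factors of the first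
block are embedded via `a` and the `n'` factors of the second block via `b`:
`R_{c,c'}(u) = ∏→_{i=1..n'} [ R_{n,i'}(u+c_n−c'_i) ⋯ R_{2,i'}(u+c_2−c'_i) R_{1,i'}(u+c_1−c'_i) ]`. -/
def fusedOp (N : ℕ) (R : ℂ → End2 N) {m n n' : ℕ} (a : Fin n → Fin m) (b : Fin n' → Fin m)
    (c : Fin n → ℂ) (c' : Fin n' → ℂ) (u : ℂ) : EndT N m :=
  ((List.finRange n').map fun i =>
    (((List.finRange n).reverse).map fun k =>
      op2 N m (R (u + c k - c' i)) (a k) (b i)).prod).prod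

/-- The list of pairs `(i,j)` with `i < j`, in lexicographic order. -/
def lexPairs (n : ℕ) : List (Fin n × Fin n) :=
  (List.finRange n).flatMap fun i =>
    ((List.finRange n).filter fun j => decide (i < j)).map fun j => (i, j)

/-- The operator `F(c) = ∏→_{1 ≤ i < j ≤ n} R_{i,j}(c_i − c_j)` on `V^{⊗ n}`
(product over the pairs `i < j` in lexicographic order). -/
def Fop (N : ℕ) (R : ℂ → End2 N) {n : ℕ} (c : Fin n → ℂ) : EndT N n :=
  ((lexPairs n).map fun p => op2 N n (R (c p.1 - c p.2)) p.1 p.2).prod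

/-- The endomorphism of `V^{⊗ n}` embedded into `V^{⊗ m}`, acting on the factors listed
by `e` and identically on all other factors. -/
def opBlock (N : ℕ) {m n : ℕ} (e : Fin n → Fin m) (X : EndT N n) : EndT N m :=
  fun f g => X (f ∘ e) (g ∘ e) *
    ∏ i : Fin m, if ∀ k, e k ≠ i then (if f i = g i then (1 : ℂ) else 0) else 1

/-- The operator `P_π` on `V^{⊗ n}` permuting the tensor factors:
`P_π (x_1 ⊗ ⋯ ⊗ x_n) = x_{π(1)} ⊗ ⋯ ⊗ x_{π(n)}`. -/
def permMat (N n : ℕ) (π : Equiv.Perm (Fin n)) : EndT N n :=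
  fun f g => if f = g ∘ π then 1 else 0

/-- The tensor product of a vector of `V^{⊗ n}` and a vector of `V^{⊗ n'}`,
as a vector of `V^{⊗ (n+n')}`. -/
def tensVec (N : ℕ) {n n' : ℕ} (x : (Fin n → Fin N) → ℂ) (y : (Fin n' → Fin N) → ℂ) :
    (Fin (n + n') → Fin N) → ℂ :=
  fun f => x (fun i => f (Fin.castAdd n' i)) * y (fun j => f (Fin.natAdd n j))

end


noncomputable section AuxProof

section Base
variable {N : ℕ}

lemma op2_eq_opBlock {m : ℕ} (X : End2 N) (a b : Fin m) :
    op2 N m X a b = opBlock N ![a,b] (fun f g => X (f 0, f 1) (g 0, g 1)) := by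
  funext f g
  simp only [op2, opBlock, Function.comp]
  congr 1
  apply Finset.prod_congr rfl
  intro i _
  have h : (∀ k : Fin 2, ![a,b] k ≠ i) ↔ (i ≠ a ∧ i ≠ b) := by
    constructor
    · intro h; exact ⟨fun hh => h 0 hh.symm, fun hh => h 1 hh.symm⟩
    · intro h k; fin_cases k
      · exact fun hh => h.1 hh.symm
      · exact fun hh => h.2 hh.symm
  exact if_congr h.symm rfl rfl

lemma opBlock_opBlock {m n n' : ℕ} (e : Fin n → Fin m) (he : Function.Injective e)
    (e' : Fin n' → Fin n) (X : EndT N n') :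
    opBlock N e (opBlock N e' X) = opBlock N (e ∘ e') X := by
  classical
  funext f g
  simp only [opBlock, Function.comp]
  rw [mul_assoc]
  congr 1
  -- remains: product identity
  have key : (∏ i : Fin m, if ∀ k, e (e' k) ≠ i then (if f i = g i then (1:ℂ) else 0) else 1)
      = (∏ k : Fin n, if ∀ j, e' j ≠ k then (if f (e k) = g (e k) then (1:ℂ) else 0) else 1) *
        (∏ i : Fin m, if ∀ k, e k ≠ i then (if f i = g i then (1:ℂ) else 0) else 1) := by
    rw [← Finset.prod_mul_prod_compl (Finset.univ.image e)
      (fun i => if ∀ k, e (e' k) ≠ i then (if f i = g i then (1:ℂ) else 0) else 1)]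
    rw [← Finset.prod_mul_prod_compl (Finset.univ.image e)
      (fun i => if ∀ k, e k ≠ i then (if f i = g i then (1:ℂ) else 0) else 1)]
    have h1 : ∏ i ∈ Finset.univ.image e, (if ∀ k, e k ≠ i then (if f i = g i then (1:ℂ) else 0) else 1) = 1 := by
      apply Finset.prod_eq_one
      intro i hi
      simp only [Finset.mem_image] at hi
      obtain ⟨k, _, rfl⟩ := hi
      rw [if_neg]
      push_neg
      exact ⟨k, rfl⟩
    have h2 : ∏ i ∈ (Finset.univ.image e)ᶜ, (if ∀ k, e (e' k) ≠ i then (if f i = g i then (1:ℂ) else 0) else 1)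
        = ∏ i ∈ (Finset.univ.image e)ᶜ, (if ∀ k, e k ≠ i then (if f i = g i then (1:ℂ) else 0) else 1) := by
      apply Finset.prod_congr rfl
      intro i hi
      simp only [Finset.mem_compl, Finset.mem_image] at hi
      have hc1 : (∀ k, e (e' k) ≠ i) := fun k hk => hi ⟨e' k, Finset.mem_univ _, hk⟩
      have hc2 : (∀ k, e k ≠ i) := fun k hk => hi ⟨k, Finset.mem_univ _, hk⟩
      rw [if_pos hc1, if_pos hc2]
    have h3 : ∏ i ∈ Finset.univ.image e, (if ∀ k, e (e' k) ≠ i then (if f i = g i then (1:ℂ) else 0) else 1)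
        = ∏ k : Fin n, (if ∀ j, e' j ≠ k then (if f (e k) = g (e k) then (1:ℂ) else 0) else 1) := by
      rw [Finset.prod_image (fun x _ y _ h => he h)]
      apply Finset.prod_congr rfl
      intro k _
      have : (∀ j, e (e' j) ≠ e k) ↔ (∀ j, e' j ≠ k) := by
        constructor
        · intro h j hj; exact h j (congrArg e hj)
        · intro h j hj; exact h j (he hj)
      exact if_congr this rfl rfl
    rw [h1, h2, h3]
    ring
  rw [key]

lemma opBlock_mul {m n : ℕ} (e : Fin n → Fin m) (he : Function.Injective e)
    (X Y : EndT N n) :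
    opBlock N e X * opBlock N e Y = opBlock N e (X * Y) := by
  classical
  funext f g
  rw [Matrix.mul_apply]
  set patch : (Fin n → Fin N) → (Fin m → Fin N) :=
    fun p i => if hx : ∃ k, e k = i then p hx.choose else f i with hpatch
  have patch_e : ∀ p k, patch p (e k) = p k := by
    intro p k
    have hx : ∃ k', e k' = e k := ⟨k, rfl⟩
    simp only [patch, dif_pos hx]
    exact congrArg p (he hx.choose_spec)
  have patch_off : ∀ p i, (∀ k, e k ≠ i) → patch p i = f i := by
    intro p i h
    simp only [patch]
    rw [dif_neg]
    rintro ⟨k, hk⟩; exact h k hk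
  have hsub : Finset.univ.image patch ⊆ Finset.univ := Finset.subset_univ _
  have hzero : ∀ h ∈ Finset.univ, h ∉ Finset.univ.image patch →
      opBlock N e X f h * opBlock N e Y h g = 0 := by
    intro h _ hni
    have : ¬ (∀ i, (∀ k, e k ≠ i) → h i = f i) := by
      intro hall
      apply hni
      rw [Finset.mem_image]
      refine ⟨h ∘ e, Finset.mem_univ _, ?_⟩
      funext i
      by_cases hx : ∃ k, e k = i
      · simp only [patch, dif_pos hx, Function.comp]
        rw [hx.choose_spec]
      · push_neg at hx
        rw [patch_off _ _ hx, hall i hx]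
    push_neg at this
    obtain ⟨i, hoff, hne⟩ := this
    have : (∏ i : Fin m, if ∀ k, e k ≠ i then (if f i = h i then (1:ℂ) else 0) else 1) = 0 :=
      Finset.prod_eq_zero (Finset.mem_univ i) (by rw [if_pos hoff, if_neg (fun hh => hne hh.symm)])
    simp [opBlock, this]
  rw [← Finset.sum_subset hsub hzero]
  rw [Finset.sum_image (fun p _ q _ hpq => funext fun k => by
    have := congrFun hpq (e k); rwa [patch_e, patch_e] at this)]
  have hterm : ∀ p, opBlock N e X f (patch p) * opBlock N e Y (patch p) g
      = (X (f ∘ e) p * Y p (g ∘ e)) *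
        ∏ i : Fin m, (if ∀ k, e k ≠ i then (if f i = g i then (1:ℂ) else 0) else 1) := by
    intro p
    have hpe : patch p ∘ e = p := funext fun k => patch_e p k
    have h1 : (∏ i : Fin m, if ∀ k, e k ≠ i then (if f i = patch p i then (1:ℂ) else 0) else 1) = 1 := by
      apply Finset.prod_eq_one
      intro i _
      by_cases hoff : ∀ k, e k ≠ i
      · rw [if_pos hoff, patch_off p i hoff, if_pos rfl]
      · rw [if_neg hoff]
    have h2 : (∏ i : Fin m, if ∀ k, e k ≠ i then (if patch p i = g i then (1:ℂ) else 0) else 1)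
        = ∏ i : Fin m, (if ∀ k, e k ≠ i then (if f i = g i then (1:ℂ) else 0) else 1) := by
      apply Finset.prod_congr rfl
      intro i _
      by_cases hoff : ∀ k, e k ≠ i
      · rw [if_pos hoff, if_pos hoff, patch_off p i hoff]
      · rw [if_neg hoff, if_neg hoff]
    simp only [opBlock, hpe, h1, h2]
    ring
  rw [Finset.sum_congr rfl (fun p _ => hterm p), ← Finset.sum_mul]
  simp only [opBlock, Matrix.mul_apply]

end Base

section Base2
variable {N : ℕ}

lemma opBlock_mul_disjoint {m n n' : ℕ} (e : Fin n → Fin m) (e' : Fin n' → Fin m)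
    (hd : ∀ k k', e k ≠ e' k') (X : EndT N n) (Y : EndT N n') (f g : Fin m → Fin N) :
    (opBlock N e X * opBlock N e' Y) f g =
      X (f ∘ e) (g ∘ e) * Y (f ∘ e') (g ∘ e') *
      ∏ i : Fin m, if (∀ k, e k ≠ i) ∧ (∀ k, e' k ≠ i) then (if f i = g i then (1:ℂ) else 0) else 1 := by
  classical
  rw [Matrix.mul_apply]
  set h₀ : Fin m → Fin N := fun i => if ∃ k, e k = i then g i else f i with hh0
  have h0_range : ∀ k, h₀ (e k) = g (e k) := fun k => if_pos ⟨k, rfl⟩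
  have h0_off : ∀ i, (∀ k, e k ≠ i) → h₀ i = f i := by
    intro i h
    apply if_neg
    rintro ⟨k, hk⟩; exact h k hk
  rw [Fintype.sum_eq_single h₀]
  · have hpe : h₀ ∘ e = g ∘ e := funext fun k => h0_range k
    have hpe' : h₀ ∘ e' = f ∘ e' := funext fun k => h0_off _ (fun j hj => hd j k hj)
    have h1 : (∏ i : Fin m, if ∀ k, e k ≠ i then (if f i = h₀ i then (1:ℂ) else 0) else 1) = 1 := by
      apply Finset.prod_eq_one
      intro i _
      by_cases hoff : ∀ k, e k ≠ i
      · rw [if_pos hoff, h0_off i hoff, if_pos rfl]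
      · rw [if_neg hoff]
    have h2 : (∏ i : Fin m, if ∀ k, e' k ≠ i then (if h₀ i = g i then (1:ℂ) else 0) else 1)
        = ∏ i : Fin m, if (∀ k, e k ≠ i) ∧ (∀ k, e' k ≠ i) then (if f i = g i then (1:ℂ) else 0) else 1 := by
      apply Finset.prod_congr rfl
      intro i _
      by_cases hoff : ∀ k, e k ≠ i
      · simp only [h0_off i hoff]
        by_cases hoff' : ∀ k, e' k ≠ i
        · rw [if_pos hoff', if_pos (show (∀ k, e k ≠ i) ∧ (∀ k, e' k ≠ i) from ⟨hoff, hoff'⟩)]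
        · rw [if_neg hoff',
            if_neg (show ¬((∀ k, e k ≠ i) ∧ (∀ k, e' k ≠ i)) from fun hc => hoff' hc.2)]
      · have hex : ∃ k, e k = i := by push_neg at hoff; exact hoff
        obtain ⟨k, hk⟩ := hex
        have hg : h₀ i = g i := by rw [← hk]; exact h0_range k
        simp only [hg]
        by_cases hoff' : ∀ k, e' k ≠ i
        · rw [if_pos hoff',
            if_neg (show ¬((∀ k, e k ≠ i) ∧ (∀ k, e' k ≠ i)) from fun hc => hc.1 k hk)]
          simp
        · rw [if_neg hoff',
            if_neg (show ¬((∀ k, e k ≠ i) ∧ (∀ k, e' k ≠ i)) from fun hc => hoff' hc.2)]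
    simp only [opBlock, hpe, hpe', h1, h2]
    ring
  · intro h hne
    have : ¬ ((∀ i, (∀ k, e k ≠ i) → h i = f i) ∧ (∀ i, (∀ k, e' k ≠ i) → h i = g i)) := by
      rintro ⟨ha, hb⟩
      apply hne
      funext i
      by_cases hx : ∃ k, e k = i
      · obtain ⟨k, rfl⟩ := hx
        rw [h0_range k]
        exact hb _ (fun j hj => hd k j hj.symm)
      · push_neg at hx
        rw [h0_off i hx]
        exact ha i hx
    rw [not_and_or] at this
    rcases this with hcase | hcase
    · push_neg at hcase
      obtain ⟨i, hoff, hnei⟩ := hcase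
      have : (∏ i : Fin m, if ∀ k, e k ≠ i then (if f i = h i then (1:ℂ) else 0) else 1) = 0 :=
        Finset.prod_eq_zero (Finset.mem_univ i) (by rw [if_pos hoff, if_neg (fun hh => hnei hh.symm)])
      simp [opBlock, this]
    · push_neg at hcase
      obtain ⟨i, hoff, hnei⟩ := hcase
      have : (∏ i : Fin m, if ∀ k, e' k ≠ i then (if h i = g i then (1:ℂ) else 0) else 1) = 0 :=
        Finset.prod_eq_zero (Finset.mem_univ i) (by rw [if_pos hoff, if_neg hnei])
      simp [opBlock, this]

lemma opBlock_comm {m n n' : ℕ} (e : Fin n → Fin m) (e' : Fin n' → Fin m)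
    (hd : ∀ k k', e k ≠ e' k') (X : EndT N n) (Y : EndT N n') :
    Commute (opBlock N e X) (opBlock N e' Y) := by
  unfold Commute SemiconjBy
  funext f g
  rw [opBlock_mul_disjoint e e' hd X Y f g,
    opBlock_mul_disjoint e' e (fun k k' h => hd k' k h.symm) Y X f g]
  have : (∏ i : Fin m, if (∀ k, e' k ≠ i) ∧ (∀ k, e k ≠ i) then (if f i = g i then (1:ℂ) else 0) else 1)
      = ∏ i : Fin m, if (∀ k, e k ≠ i) ∧ (∀ k, e' k ≠ i) then (if f i = g i then (1:ℂ) else 0) else 1 :=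
    Finset.prod_congr rfl (fun i _ => if_congr and_comm rfl rfl)
  rw [this]
  ring

end Base2

section Chunk3
variable {N : ℕ}

lemma op2_comm {m : ℕ} (X Y : End2 N) (a b c d : Fin m)
    (hac : a ≠ c) (had : a ≠ d) (hbc : b ≠ c) (hbd : b ≠ d) :
    Commute (op2 N m X a b) (op2 N m Y c d) := by
  rw [op2_eq_opBlock X a b, op2_eq_opBlock Y c d]
  apply opBlock_comm
  intro k k'
  fin_cases k <;> fin_cases k' <;> simpa

lemma opBlock_op2 {m : ℕ} (e : Fin 3 → Fin m) (he : Function.Injective e)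
    (X : End2 N) (i j : Fin 3) :
    opBlock N e (op2 N 3 X i j) = op2 N m X (e i) (e j) := by
  have hcomp : e ∘ ![i,j] = ![e i, e j] := by
    funext k; fin_cases k <;> rfl
  rw [op2_eq_opBlock X i j]
  refine (opBlock_opBlock e he ![i,j] _).trans ?_
  rw [hcomp]
  exact (op2_eq_opBlock X (e i) (e j)).symm

lemma op2_yb {m : ℕ} (R : ℂ → End2 N) (hR : YangBaxter N R) (a b c : Fin m)
    (hab : a ≠ b) (hac : a ≠ c) (hbc : b ≠ c) (u v : ℂ) :
    op2 N m (R u) a b * op2 N m (R (u+v)) a c * op2 N m (R v) b c =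
    op2 N m (R v) b c * op2 N m (R (u+v)) a c * op2 N m (R u) a b := by
  have he : Function.Injective ![a,b,c] := by
    intro x y hxy
    fin_cases x <;> fin_cases y <;> simp_all
  have h01 : op2 N m (R u) a b = opBlock N ![a,b,c] (op2 N 3 (R u) 0 1) := by
    rw [opBlock_op2 ![a,b,c] he]; rfl
  have h02 : op2 N m (R (u+v)) a c = opBlock N ![a,b,c] (op2 N 3 (R (u+v)) 0 2) := by
    rw [opBlock_op2 ![a,b,c] he]; rfl
  have h12 : op2 N m (R v) b c = opBlock N ![a,b,c] (op2 N 3 (R v) 1 2) := by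
    rw [opBlock_op2 ![a,b,c] he]; rfl
  rw [h01, h02, h12, opBlock_mul _ he, opBlock_mul _ he, opBlock_mul _ he,
    opBlock_mul _ he, hR u v]

end Chunk3

section Lists
variable {N : ℕ} (R : ℂ → End2 N) {m : ℕ}

/-- Column operator: product over list `P` (in reverse order) of `R`-matrices linking
each site of `P` with the single site `q`. -/
def colOp (P : List (Fin m × ℂ)) (q : Fin m × ℂ) : EndT N m :=
  (P.reverse.map fun p => op2 N m (R (p.2 - q.2)) p.1 q.1).prod

/-- Fused operator for lists of (site, parameter) pairs. -/
def GOp (P Q : List (Fin m × ℂ)) : EndT N m :=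
  (Q.map (colOp R P)).prod

lemma colOp_cons (p : Fin m × ℂ) (P : List (Fin m × ℂ)) (q : Fin m × ℂ) :
    colOp R (p :: P) q = colOp R P q * op2 N m (R (p.2 - q.2)) p.1 q.1 := by
  simp [colOp]

lemma GOp_cons (P : List (Fin m × ℂ)) (q : Fin m × ℂ) (Q : List (Fin m × ℂ)) :
    GOp R P (q :: Q) = colOp R P q * GOp R P Q := by
  simp [GOp]

lemma commute_op2_colOp (Z : End2 N) (a b : Fin m) (P : List (Fin m × ℂ)) (q : Fin m × ℂ)
    (hP : ∀ p ∈ P, a ≠ p.1 ∧ b ≠ p.1) (ha : a ≠ q.1) (hb : b ≠ q.1) :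
    Commute (op2 N m Z a b) (colOp R P q) := by
  apply Commute.list_prod_right
  intro x hx
  simp only [List.mem_map, List.mem_reverse] at hx
  obtain ⟨p, hp, rfl⟩ := hx
  exact op2_comm Z _ a b p.1 q.1 (hP p hp).1 ha (hP p hp).2 hb

lemma commute_op2_GOp (Z : End2 N) (a b : Fin m) (P Q : List (Fin m × ℂ))
    (hP : ∀ p ∈ P, a ≠ p.1 ∧ b ≠ p.1) (hQ : ∀ q ∈ Q, a ≠ q.1 ∧ b ≠ q.1) :
    Commute (op2 N m Z a b) (GOp R P Q) := by
  apply Commute.list_prod_right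
  intro x hx
  simp only [List.mem_map] at hx
  obtain ⟨q, hq, rfl⟩ := hx
  exact commute_op2_colOp R Z a b P q hP (hQ q hq).1 (hQ q hq).2

lemma commute_colOp_colOp (P P' : List (Fin m × ℂ)) (q q' : Fin m × ℂ)
    (hPP' : ∀ p ∈ P, ∀ p' ∈ P', p.1 ≠ p'.1)
    (hPq' : ∀ p ∈ P, p.1 ≠ q'.1) (hqP' : ∀ p' ∈ P', q.1 ≠ p'.1) (hqq' : q.1 ≠ q'.1) :
    Commute (colOp R P q) (colOp R P' q') := by
  apply Commute.list_prod_left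
  intro x hx
  simp only [List.mem_map, List.mem_reverse] at hx
  obtain ⟨p, hp, rfl⟩ := hx
  exact commute_op2_colOp R _ p.1 q.1 P' q'
    (fun p' hp' => ⟨hPP' p hp p' hp', hqP' p' hp'⟩) (hPq' p hp) hqq'

lemma commute_colOp_GOp (P' : List (Fin m × ℂ)) (q' : Fin m × ℂ) (P Q : List (Fin m × ℂ))
    (h1 : ∀ p' ∈ P', ∀ p ∈ P, p'.1 ≠ p.1) (h2 : ∀ p' ∈ P', ∀ q ∈ Q, p'.1 ≠ q.1)
    (h3 : ∀ p ∈ P, q'.1 ≠ p.1) (h4 : ∀ q ∈ Q, q'.1 ≠ q.1) :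
    Commute (colOp R P' q') (GOp R P Q) := by
  apply Commute.list_prod_left
  intro x hx
  simp only [List.mem_map, List.mem_reverse] at hx
  obtain ⟨p, hp, rfl⟩ := hx
  exact commute_op2_GOp R _ p.1 q'.1 P Q
    (fun pp hpp => ⟨h1 p hp pp hpp, h3 pp hpp⟩)
    (fun qq hqq => ⟨h2 p hp qq hqq, h4 qq hqq⟩)

end Lists

section Induction
variable {N : ℕ} (R : ℂ → End2 N) {m : ℕ}

lemma swap3 {a b c : EndT N m} (h : a * b * c = c * b * a) (X : EndT N m) :
    a * (b * (c * X)) = c * (b * (a * X)) := by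
  simp only [← mul_assoc]
  rw [h]

lemma rowLemma (hR : YangBaxter N R) (P : List (Fin m × ℂ)) (q s : Fin m × ℂ)
    (hP : (P.map Prod.fst).Nodup)
    (hPq : ∀ p ∈ P, p.1 ≠ q.1) (hPs : ∀ p ∈ P, p.1 ≠ s.1) (hqs : q.1 ≠ s.1) :
    colOp R P q * colOp R P s * op2 N m (R (q.2 - s.2)) q.1 s.1 =
    op2 N m (R (q.2 - s.2)) q.1 s.1 * colOp R P s * colOp R P q := by
  induction P with
  | nil => simp [colOp]
  | cons p P' ih =>
    have hmem : ∀ p' ∈ P', p.1 ≠ p'.1 := by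
      intro p' hp' h
      have : p.1 ∈ P'.map Prod.fst := by
        rw [h]; exact List.mem_map_of_mem (f := Prod.fst) hp'
      simp only [List.map_cons, List.nodup_cons] at hP
      exact hP.1 this
    have hP' : (P'.map Prod.fst).Nodup := by
      simp only [List.map_cons, List.nodup_cons] at hP; exact hP.2
    have hPq' := fun p' hp' => hPq p' (List.mem_cons_of_mem p hp')
    have hPs' := fun p' hp' => hPs p' (List.mem_cons_of_mem p hp')
    have hpq := hPq p List.mem_cons_self
    have hps := hPs p List.mem_cons_self
    rw [colOp_cons, colOp_cons]
    set A' := colOp R P' q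
    set B' := colOp R P' s
    set r := op2 N m (R (q.2 - s.2)) q.1 s.1
    set rp := op2 N m (R (p.2 - q.2)) p.1 q.1
    set rp' := op2 N m (R (p.2 - s.2)) p.1 s.1
    have hc1 : Commute rp B' :=
      commute_op2_colOp R _ p.1 q.1 P' s
        (fun p' hp' => ⟨hmem p' hp', fun h => (hPq' p' hp') h.symm⟩) hps hqs
    have hc2 : Commute A' rp' :=
      (commute_op2_colOp R _ p.1 s.1 P' q
        (fun p' hp' => ⟨hmem p' hp', fun h => (hPs' p' hp') h.symm⟩) hpq hqs.symm).symm
    have harg : p.2 - s.2 = p.2 - q.2 + (q.2 - s.2) := by ring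
    have e2 : rp * rp' * r = r * rp' * rp := by
      simp only [rp, rp', r, harg]
      exact op2_yb R hR p.1 q.1 s.1 hpq hps hqs (p.2 - q.2) (q.2 - s.2)
    have e2' : rp * (rp' * r) = r * (rp' * rp) := by
      simpa [mul_assoc] using e2
    have e3 := ih hP' hPq' hPs'
    have e3' : ∀ X, A' * (B' * (r * X)) = r * (B' * (A' * X)) := fun X => swap3 e3 X
    simp only [mul_assoc]
    rw [hc1.left_comm, e2', e3', hc2.left_comm]

end Induction

section Induction2
variable {N : ℕ} (R : ℂ → End2 N) {m : ℕ}

lemma colLemma (hR : YangBaxter N R) (P Q : List (Fin m × ℂ)) (s : Fin m × ℂ)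
    (hP : (P.map Prod.fst).Nodup) (hQ : (Q.map Prod.fst).Nodup)
    (hPQ : ∀ p ∈ P, ∀ q ∈ Q, p.1 ≠ q.1)
    (hPs : ∀ p ∈ P, p.1 ≠ s.1) (hQs : ∀ q ∈ Q, q.1 ≠ s.1) :
    GOp R P Q * colOp R P s * colOp R Q s =
    colOp R Q s * colOp R P s * GOp R P Q := by
  induction Q with
  | nil => simp [GOp, colOp]
  | cons q Q' ih =>
    have hmem : ∀ q' ∈ Q', q.1 ≠ q'.1 := by
      intro q' hq' h
      have : q.1 ∈ Q'.map Prod.fst := by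
        rw [h]; exact List.mem_map_of_mem (f := Prod.fst) hq'
      simp only [List.map_cons, List.nodup_cons] at hQ
      exact hQ.1 this
    have hQ' : (Q'.map Prod.fst).Nodup := by
      simp only [List.map_cons, List.nodup_cons] at hQ; exact hQ.2
    have hPQ' := fun p hp q' hq' => hPQ p hp q' (List.mem_cons_of_mem q hq')
    have hQs' := fun q' hq' => hQs q' (List.mem_cons_of_mem q hq')
    have hPq := fun p hp => hPQ p hp q List.mem_cons_self
    have hqs := hQs q List.mem_cons_self
    rw [GOp_cons, colOp_cons]
    set Aq := colOp R P q
    set G' := GOp R P Q'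
    set cP := colOp R P s
    set cQ' := colOp R Q' s
    set rq := op2 N m (R (q.2 - s.2)) q.1 s.1
    have f1 : Commute Aq cQ' :=
      commute_colOp_colOp R P Q' q s hPQ' hPs (fun q' hq' => hmem q' hq') hqs
    have f2 : Commute G' rq :=
      (commute_op2_GOp R _ q.1 s.1 P Q'
        (fun p hp => ⟨fun h => (hPq p hp) h.symm, fun h => (hPs p hp) h.symm⟩)
        (fun q' hq' => ⟨hmem q' hq', fun h => (hQs' q' hq') h.symm⟩)).symm
    have f3 := rowLemma R hR P q s hP hPq hPs hqs
    have f3' : ∀ X, Aq * (cP * (rq * X)) = rq * (cP * (Aq * X)) := fun X => swap3 f3 X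
    have f4 := ih hQ' hPQ' hQs'
    have f4' : ∀ X, G' * (cP * (cQ' * X)) = cQ' * (cP * (G' * X)) := fun X => swap3 f4 X
    simp only [mul_assoc]
    rw [f4', f2.eq, f1.left_comm, f3']

lemma threeList (hR : YangBaxter N R) (P Q S : List (Fin m × ℂ))
    (hP : (P.map Prod.fst).Nodup) (hQ : (Q.map Prod.fst).Nodup)
    (hS : (S.map Prod.fst).Nodup)
    (hPQ : ∀ p ∈ P, ∀ q ∈ Q, p.1 ≠ q.1)
    (hPS : ∀ p ∈ P, ∀ s ∈ S, p.1 ≠ s.1)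
    (hQS : ∀ q ∈ Q, ∀ s ∈ S, q.1 ≠ s.1) :
    GOp R P Q * GOp R P S * GOp R Q S =
    GOp R Q S * GOp R P S * GOp R P Q := by
  induction S with
  | nil => simp [GOp]
  | cons s S' ih =>
    have hmem : ∀ s' ∈ S', s.1 ≠ s'.1 := by
      intro s' hs' h
      have : s.1 ∈ S'.map Prod.fst := by
        rw [h]; exact List.mem_map_of_mem (f := Prod.fst) hs'
      simp only [List.map_cons, List.nodup_cons] at hS
      exact hS.1 this
    have hS' : (S'.map Prod.fst).Nodup := by
      simp only [List.map_cons, List.nodup_cons] at hS; exact hS.2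
    have hPS' := fun p hp s' hs' => hPS p hp s' (List.mem_cons_of_mem s hs')
    have hQS' := fun q hq s' hs' => hQS q hq s' (List.mem_cons_of_mem s hs')
    have hPs := fun p hp => hPS p hp s List.mem_cons_self
    have hQs := fun q hq => hQS q hq s List.mem_cons_self
    rw [GOp_cons, GOp_cons]
    set GPQ := GOp R P Q
    set cPs := colOp R P s
    set cQs := colOp R Q s
    set GPS' := GOp R P S'
    set GQS' := GOp R Q S'
    have g1 : Commute GPS' cQs :=
      (commute_colOp_GOp R Q s P S'
        (fun q hq p hp => (hPQ p hp q hq).symm) hQS'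
        (fun p hp => (hPs p hp).symm) (fun s' hs' => hmem s' hs')).symm
    have g2 := colLemma R hR P Q s hP hQ hPQ hPs hQs
    have g2' : ∀ X, GPQ * (cPs * (cQs * X)) = cQs * (cPs * (GPQ * X)) := fun X => swap3 g2 X
    have g3 : Commute cPs GQS' :=
      commute_colOp_GOp R P s Q S' hPQ hPS'
        (fun q hq => (hQs q hq).symm) (fun s' hs' => hmem s' hs')
    have g4 := ih hS' hPS' hQS'
    have g4' : GPQ * (GPS' * GQS') = GQS' * (GPS' * GPQ) := by
      simpa [mul_assoc] using g4
    simp only [mul_assoc]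
    rw [g1.left_comm, g2', g4', g3.left_comm]

end Induction2


section Glue
variable {N : ℕ} (R : ℂ → End2 N)

lemma fusedOp_eq_GOp {m n n' : ℕ} (a : Fin n → Fin m) (b : Fin n' → Fin m)
    (c : Fin n → ℂ) (c' : Fin n' → ℂ) (u : ℂ) (x : Fin n → ℂ) (y : Fin n' → ℂ)
    (hxy : ∀ k i, x k - y i = u + c k - c' i) :
    fusedOp N R a b c c' u =
      GOp R ((List.finRange n).map fun k => (a k, x k))
        ((List.finRange n').map fun i => (b i, y i)) := by
  unfold fusedOp GOp colOp
  rw [List.map_map]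
  apply congrArg
  apply List.map_congr_left
  intro i _
  simp only [Function.comp]
  rw [← List.map_reverse, List.map_map]
  apply congrArg
  apply List.map_congr_left
  intro k _
  simp only [Function.comp]
  rw [hxy k i]

end Glue

end AuxProof

/-- The fused operators satisfy the Yang--Baxter equation on
`V^{⊗n} ⊗ V^{⊗n'} ⊗ V^{⊗n''}`. -/
theorem fused_yang_baxter
    (N : ℕ) (R : ℂ → End2 N) (hR : YangBaxter N R)
    (n n' n'' : ℕ) (hn : 0 < n) (hn' : 0 < n') (hn'' : 0 < n'')
    (c : Fin n → ℂ) (c' : Fin n' → ℂ) (c'' : Fin n'' → ℂ) (u v : ℂ) :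
    fusedOp N R (fun k => Fin.castAdd n'' (Fin.castAdd n' k))
      (fun j => Fin.castAdd n'' (Fin.natAdd n j)) c c' u *
    fusedOp N R (fun k => Fin.castAdd n'' (Fin.castAdd n' k))
      (fun l => Fin.natAdd (n + n') l) c c'' (u + v) *
    fusedOp N R (fun j => Fin.castAdd n'' (Fin.natAdd n j))
      (fun l => Fin.natAdd (n + n') l) c' c'' v =
    fusedOp N R (fun j => Fin.castAdd n'' (Fin.natAdd n j))
      (fun l => Fin.natAdd (n + n') l) c' c'' v *
    fusedOp N R (fun k => Fin.castAdd n'' (Fin.castAdd n' k))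
      (fun l => Fin.natAdd (n + n') l) c c'' (u + v) *
    fusedOp N R (fun k => Fin.castAdd n'' (Fin.castAdd n' k))
      (fun j => Fin.castAdd n'' (Fin.natAdd n j)) c c' u := by
    classical
  set P : List (Fin (n + n' + n'') × ℂ) :=
    (List.finRange n).map fun k => ((Fin.castAdd n'' (Fin.castAdd n' k) : Fin (n + n' + n'')), u + c k) with hPdef
  set Q : List (Fin (n + n' + n'') × ℂ) :=
    (List.finRange n').map fun j => ((Fin.castAdd n'' (Fin.natAdd n j) : Fin (n + n' + n'')), c' j) with hQdef
  set S : List (Fin (n + n' + n'') × ℂ) :=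
    (List.finRange n'').map fun l => ((Fin.natAdd (n + n') l : Fin (n + n' + n'')), c'' l - v) with hSdef
  have hA : fusedOp N R (fun k => Fin.castAdd n'' (Fin.castAdd n' k))
      (fun j => Fin.castAdd n'' (Fin.natAdd n j)) c c' u = GOp R P Q :=
    fusedOp_eq_GOp R _ _ c c' u (fun k => u + c k) (fun j => c' j) (fun k i => by ring)
  have hB : fusedOp N R (fun k => Fin.castAdd n'' (Fin.castAdd n' k))
      (fun l => Fin.natAdd (n + n') l) c c'' (u + v) = GOp R P S :=
    fusedOp_eq_GOp R _ _ c c'' (u + v) (fun k => u + c k) (fun l => c'' l - v)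
      (fun k i => by ring)
  have hC : fusedOp N R (fun j => Fin.castAdd n'' (Fin.natAdd n j))
      (fun l => Fin.natAdd (n + n') l) c' c'' v = GOp R Q S :=
    fusedOp_eq_GOp R _ _ c' c'' v (fun j => c' j) (fun l => c'' l - v)
      (fun k i => by ring)
  rw [hA, hB, hC]
  apply threeList R hR P Q S
  · rw [hPdef, List.map_map]
    refine List.Nodup.map ?_ (List.nodup_finRange n)
    intro x y h
    have := congrArg Fin.val h
    simp only [Function.comp_apply, Fin.coe_castAdd] at this
    exact Fin.ext this
  · rw [hQdef, List.map_map]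
    refine List.Nodup.map ?_ (List.nodup_finRange n')
    intro x y h
    have := congrArg Fin.val h
    simp only [Function.comp_apply, Fin.coe_castAdd, Fin.coe_natAdd] at this
    exact Fin.ext (by omega)
  · rw [hSdef, List.map_map]
    refine List.Nodup.map ?_ (List.nodup_finRange n'')
    intro x y h
    have := congrArg Fin.val h
    simp only [Function.comp_apply, Fin.coe_natAdd] at this
    exact Fin.ext (by omega)
  · rintro p hp q hq
    simp only [hPdef, hQdef, List.mem_map] at hp hq
    obtain ⟨k, -, rfl⟩ := hp
    obtain ⟨j, -, rfl⟩ := hq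
    intro h
    have := congrArg Fin.val h
    simp only [Fin.coe_castAdd, Fin.coe_natAdd] at this
    omega
  · rintro p hp s hs
    simp only [hPdef, hSdef, List.mem_map] at hp hs
    obtain ⟨k, -, rfl⟩ := hp
    obtain ⟨l, -, rfl⟩ := hs
    intro h
    have := congrArg Fin.val h
    simp only [Fin.coe_castAdd, Fin.coe_natAdd] at this
    omega
  · rintro q hq s hs
    simp only [hQdef, hSdef, List.mem_map] at hq hs
    obtain ⟨j, -, rfl⟩ := hq
    obtain ⟨l, -, rfl⟩ := hs
    intro h
    have := congrArg Fin.val h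
    simp only [Fin.coe_castAdd, Fin.coe_natAdd] at this
    omega
end

section
/- Let n, n' be positive integers, c ∈ ℂ^n and c' ∈ ℂ^{n'}. Then for all u ∈ ℂ the fused operator admits the alternative expression R_{c,c'}(u) = ∏_{i=n,…,1} [ R_{i,1'}(u+c_i−c'_1) R_{i,2'}(u+c_i−c'_2) ⋯ R_{i,n''}(u+c_i−c'_{n'}) ], where the outer product over i is taken with i decreasing from n to 1 (the leftmost group of factors corresponds to i = n). -/
/-!
We model the finite-dimensional complex vector space `V` as `ℂ^N` (i.e. `Fin N → ℂ`),
so that `V^{⊗ n}` is `(Fin n → Fin N) → ℂ` and endomorphisms of `V^{⊗ n}` are matrices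
indexed by multi-indices `Fin n → Fin N`.
-/

open scoped BigOperators

lemma op2_mul_disjoint {N m : ℕ} (X Y : End2 N) (a b a' b' : Fin m)
    (hab : a ≠ b) (h1 : a ≠ a') (h2 : a ≠ b') (h3 : b ≠ a') (h4 : b ≠ b') :
    op2 N m X a b * op2 N m Y a' b' = fun f g =>
      X (f a, f b) (g a, g b) * Y (f a', f b') (g a', g b') *
      ∏ i : Fin m, if i ≠ a ∧ i ≠ b ∧ i ≠ a' ∧ i ≠ b'
        then (if f i = g i then (1:ℂ) else 0) else 1 := by
  funext f g
  rw [Matrix.mul_apply]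
  set h₀ : Fin m → Fin N := Function.update (Function.update f a (g a)) b (g b) with hh₀
  have h₀a : h₀ a = g a := by
    simp [hh₀, Function.update_of_ne hab]
  have h₀b : h₀ b = g b := by simp [hh₀]
  have h₀other : ∀ i, i ≠ a → i ≠ b → h₀ i = f i := by
    intro i hia hib
    simp [hh₀, Function.update_of_ne hib, Function.update_of_ne hia]
  rw [Finset.sum_eq_single h₀]
  · -- value at h₀
    unfold op2
    have e1 : (∏ i : Fin m, if i ≠ a ∧ i ≠ b then (if f i = h₀ i then (1:ℂ) else 0) else 1) = 1 := by
      apply Finset.prod_eq_one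
      intro i _
      by_cases hia : i = a
      · simp [hia]
      by_cases hib : i = b
      · simp [hib]
      · simp [hia, hib, h₀other i hia hib]
    rw [e1, h₀a, h₀b, h₀other a' (Ne.symm h1) (Ne.symm h3), h₀other b' (Ne.symm h2) (Ne.symm h4)]
    have e2 : (∏ i : Fin m, if i ≠ a' ∧ i ≠ b' then (if h₀ i = g i then (1:ℂ) else 0) else 1)
        = ∏ i : Fin m, if i ≠ a ∧ i ≠ b ∧ i ≠ a' ∧ i ≠ b'
            then (if f i = g i then (1:ℂ) else 0) else 1 := by
      apply Finset.prod_congr rfl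
      intro i _
      by_cases hia : i = a
      · simp [hia, h₀a, h1, h2]
      by_cases hib : i = b
      · simp [hib, h₀b, h3, h4]
      by_cases hia' : i = a'
      · simp [hia', hia, hib]
      by_cases hib' : i = b'
      · simp [hib', hia, hib]
      · simp [hia, hib, hia', hib', h₀other i hia hib]
    rw [e2]; ring
  · -- other h give 0
    intro h _ hne
    have : ∃ i, h i ≠ h₀ i := Function.ne_iff.mp hne
    obtain ⟨i, hi⟩ := this
    unfold op2
    by_cases hia : i = a
    · subst hia
      rw [h₀a] at hi
      have : (∏ j : Fin m, if j ≠ a' ∧ j ≠ b' then (if h j = g j then (1:ℂ) else 0) else 1) = 0 := by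
        apply Finset.prod_eq_zero (Finset.mem_univ i)
        simp [h1, h2, hi]
      rw [this]; ring
    by_cases hib : i = b
    · subst hib
      rw [h₀b] at hi
      have : (∏ j : Fin m, if j ≠ a' ∧ j ≠ b' then (if h j = g j then (1:ℂ) else 0) else 1) = 0 := by
        apply Finset.prod_eq_zero (Finset.mem_univ i)
        simp [h3, h4, hi]
      rw [this]; ring
    · rw [h₀other i hia hib] at hi
      have : (∏ j : Fin m, if j ≠ a ∧ j ≠ b then (if f j = h j then (1:ℂ) else 0) else 1) = 0 := by
        apply Finset.prod_eq_zero (Finset.mem_univ i)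
        simp [hia, hib, Ne.symm hi]
      rw [this]; ring
  · intro habs; exact absurd (Finset.mem_univ h₀) habs

lemma op2_commute {N m : ℕ} (X Y : End2 N) (a b a' b' : Fin m)
    (hab : a ≠ b) (ha'b' : a' ≠ b')
    (h1 : a ≠ a') (h2 : a ≠ b') (h3 : b ≠ a') (h4 : b ≠ b') :
    Commute (op2 N m X a b) (op2 N m Y a' b') := by
  unfold Commute SemiconjBy
  rw [op2_mul_disjoint X Y a b a' b' hab h1 h2 h3 h4,
    op2_mul_disjoint Y X a' b' a b ha'b' (Ne.symm h1) (Ne.symm h3) (Ne.symm h2) (Ne.symm h4)]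
  funext f g
  have hcond : ∀ i : Fin m, (i ≠ a' ∧ i ≠ b' ∧ i ≠ a ∧ i ≠ b) = (i ≠ a ∧ i ≠ b ∧ i ≠ a' ∧ i ≠ b') :=
    fun i => propext (by tauto)
  simp only [hcond]
  ring

lemma prod_map_mul_split {M : Type*} [Monoid M] {β : Type*} (f g : β → M) :
    ∀ (L : List β), L.Nodup →
    (∀ i ∈ L, ∀ j ∈ L, i ≠ j → Commute (g i) (f j)) →
    (L.map fun i => f i * g i).prod = (L.map f).prod * (L.map g).prod := by
  intro L
  induction L with
  | nil => simp
  | cons i L ih =>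
    intro hnd hc
    have hiL : i ∉ L := (List.nodup_cons.mp hnd).1
    have hnd' : L.Nodup := (List.nodup_cons.mp hnd).2
    simp only [List.map_cons, List.prod_cons]
    rw [ih hnd' (fun x hx y hy hxy => hc x (List.mem_cons_of_mem _ hx) y (List.mem_cons_of_mem _ hy) hxy)]
    have hcomm : Commute (g i) ((L.map f).prod) := by
      apply Commute.list_prod_right
      intro y hy
      obtain ⟨j, hj, rfl⟩ := List.mem_map.mp hy
      exact hc i List.mem_cons_self j (List.mem_cons_of_mem _ hj)
        (fun h => hiL (h ▸ hj))
    rw [mul_assoc, ← mul_assoc (g i), hcomm.eq, mul_assoc, mul_assoc, ← mul_assoc]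

lemma prod_swap_lists {M : Type*} [Monoid M] {α β : Type*} (B : α → β → M) :
    ∀ (L : List α) (L' : List β), L.Nodup → L'.Nodup →
    (∀ k l i j, k ≠ l → i ≠ j → Commute (B k i) (B l j)) →
    (L'.map fun i => (L.map fun k => B k i).prod).prod
      = (L.map fun k => (L'.map fun i => B k i).prod).prod := by
  intro L
  induction L with
  | nil => intro L' _ _ _; simp
  | cons k L ih =>
    intro L' hnd hnd' hc
    have hkL : k ∉ L := (List.nodup_cons.mp hnd).1
    have hndL : L.Nodup := (List.nodup_cons.mp hnd).2
    simp only [List.map_cons, List.prod_cons]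
    have : (L'.map fun i => B k i * (L.map fun k' => B k' i).prod).prod
        = (L'.map fun i => B k i).prod * (L'.map fun i => (L.map fun k' => B k' i).prod).prod := by
      apply prod_map_mul_split _ _ L' hnd'
      intro i hi j hj hij
      apply Commute.list_prod_left
      intro y hy
      obtain ⟨l, hl, rfl⟩ := List.mem_map.mp hy
      exact hc l k i j (fun h => hkL (h ▸ hl)) hij
    rw [this, ih L' hndL hnd' hc]


/-- Alternative expression for the fused operator:
`R_{c,c'}(u) = ∏←_{i=n..1} [ R_{i,1'}(u+c_i−c'_1) R_{i,2'}(u+c_i−c'_2) ⋯ R_{i,n''}(u+c_i−c'_{n'}) ]`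
(the outer product with `i` decreasing from `n` to `1`). -/
theorem fused_alternative_form
    (N : ℕ) (R : ℂ → End2 N) (hR : YangBaxter N R)
    (n n' : ℕ) (hn : 0 < n) (hn' : 0 < n')
    (c : Fin n → ℂ) (c' : Fin n' → ℂ) (u : ℂ) :
    fusedOp N R (Fin.castAdd n') (Fin.natAdd n) c c' u =
    (((List.finRange n).reverse).map fun k =>
      ((List.finRange n').map fun i =>
        op2 N (n + n') (R (u + c k - c' i)) (Fin.castAdd n' k) (Fin.natAdd n i)).prod).prod := by
  unfold fusedOp
  apply prod_swap_lists
    (fun k i => op2 N (n + n') (R (u + c k - c' i)) (Fin.castAdd n' k) (Fin.natAdd n i))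
    ((List.finRange n).reverse) (List.finRange n')
    (List.nodup_reverse.mpr (List.nodup_finRange n)) (List.nodup_finRange n')
  intro k l i j hkl hij
  have hca : ∀ (x : Fin n) (y : Fin n'), Fin.castAdd n' x ≠ Fin.natAdd n y := by
    intro x y h
    have := congrArg Fin.val h
    simp [Fin.castAdd, Fin.natAdd] at this
    omega
  apply op2_commute
  · exact hca k i
  · exact hca l j
  · intro h
    exact hkl (Fin.castAdd_injective n n' h)
  · exact hca k j
  · exact fun h => hca l i h.symm
  · intro h
    exact hij ((Fin.strictMono_natAdd n).injective h)
end

section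
/- Let n ≥ 2 and c = (c_1,…,c_n) ∈ ℂ^n. Define R̂(u) := R(u)P ∈ End(V⊗V). Then F(c) = [ ∏_{i=1,…,n−1}^{→} R̂_{i,i+1}(c_1−c_{i+1}) R̂_{i−1,i}(c_2−c_{i+1}) ⋯ R̂_{2,3}(c_{i−1}−c_{i+1}) R̂_{1,2}(c_i−c_{i+1}) ] · P_{w_n}, where the outer product over i is taken left to right with i increasing from 1 to n−1, and inside the i-th group the j-th factor (j = 1,…,i, left to right) is R̂_{i+1−j, i+2−j}(c_j − c_{i+1}). -/
/-!
We model the finite-dimensional complex vector space `V` as `ℂ^N` (i.e. `Fin N → ℂ`),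
so that `V^{⊗ n}` is `(Fin n → Fin N) → ℂ` and endomorphisms of `V^{⊗ n}` are matrices
indexed by multi-indices `Fin n → Fin N`.
-/

open scoped BigOperators

namespace FopAux

open Matrix

variable {N n : ℕ}

lemma prod_delta (f g : Fin n → Fin N) (p : Fin n → Prop) [DecidablePred p] :
    (∏ i, if p i then (if f i = g i then (1:ℂ) else 0) else 1)
      = if ∀ i, p i → f i = g i then 1 else 0 := by
  split_ifs with h
  · exact Finset.prod_eq_one fun i _ => by
      by_cases hp : p i
      · simp [hp, h i hp]
      · simp [hp]
  · push_neg at h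
    obtain ⟨i, hp, hne⟩ := h
    exact Finset.prod_eq_zero (Finset.mem_univ i) (by simp [hp, hne])

lemma op2_apply (X : End2 N) (a b : Fin n) (f g : Fin n → Fin N) :
    op2 N n X a b f g = X (f a, f b) (g a, g b) *
      (if ∀ i, i ≠ a → i ≠ b → f i = g i then 1 else 0) := by
  unfold op2
  rw [show (∏ i : Fin n, if i ≠ a ∧ i ≠ b then (if f i = g i then (1:ℂ) else 0) else 1)
      = ∏ i : Fin n, if (fun i => i ≠ a ∧ i ≠ b) i then (if f i = g i then (1:ℂ) else 0) else 1
      from rfl, prod_delta]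
  congr 1
  simp only [and_imp]

lemma permMat_apply (π : Equiv.Perm (Fin n)) (f g : Fin n → Fin N) :
    permMat N n π f g = if f = g ∘ π then 1 else 0 := rfl

lemma permMat_refl : permMat N n (Equiv.refl (Fin n)) = 1 := by
  ext f g
  simp [permMat, Matrix.one_apply, Function.comp_def, funext_iff, eq_comm]

lemma permMat_mul (π ρ : Equiv.Perm (Fin n)) :
    permMat N n π * permMat N n ρ = permMat N n (π.trans ρ) := by
  ext f g
  rw [Matrix.mul_apply]
  rw [Finset.sum_eq_single (g ∘ ρ)]
  · simp [permMat, Function.comp_def]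
    congr
  · intro h _ hne
    simp [permMat, hne]
  · simp

end FopAux

namespace FopAux

variable {N n : ℕ}

lemma op2_mul_permMat (X : End2 N) (a b : Fin n) (σ : Equiv.Perm (Fin n)) :
    op2 N n X a b * permMat N n σ = permMat N n σ * op2 N n X (σ a) (σ b) := by
  ext f g
  have h1 : (op2 N n X a b * permMat N n σ) f g = op2 N n X a b f (g ∘ σ) := by
    rw [Matrix.mul_apply]
    rw [Finset.sum_eq_single (g ∘ σ)]
    · simp [permMat]
    · intro h _ hne
      simp [permMat, hne]
    · simp
  have h2 : (permMat N n σ * op2 N n X (σ a) (σ b)) f g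
      = op2 N n X (σ a) (σ b) (f ∘ σ.symm) g := by
    rw [Matrix.mul_apply]
    rw [Finset.sum_eq_single (f ∘ σ.symm)]
    · have hf : f = (f ∘ σ.symm) ∘ σ := by funext x; simp
      rw [permMat_apply, if_pos hf, one_mul]
    · intro h _ hne
      have : ¬ f = h ∘ σ := fun hf => hne (by funext x; simp [congrFun hf (σ.symm x)])
      simp [permMat, this]
    · simp
  rw [h1, h2, op2_apply, op2_apply]
  simp only [Function.comp_apply, Equiv.symm_apply_apply]
  congr 1
  refine if_congr ⟨?_, ?_⟩ rfl rfl
  · intro H i h1 h2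
    simpa using H (σ.symm i) (fun e => h1 (by rw [← e]; simp)) (fun e => h2 (by rw [← e]; simp))
  · intro H i h1 h2
    simpa using H (σ i) (fun e => h1 (σ.injective e)) (fun e => h2 (σ.injective e))

lemma op2_flip (a b : Fin n) (hab : a ≠ b) :
    op2 N n (flipMat N) a b = permMat N n (Equiv.swap a b) := by
  ext f g
  rw [op2_apply, permMat_apply]
  by_cases h : f = g ∘ Equiv.swap a b
  · rw [if_pos h, h]
    have c1 : (g ∘ Equiv.swap a b) a = g b := by simp
    have c2 : (g ∘ Equiv.swap a b) b = g a := by simp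
    rw [if_pos (show ∀ i, i ≠ a → i ≠ b → (g ∘ Equiv.swap a b) i = g i from
      fun i hia hib => by simp [Equiv.swap_apply_of_ne_of_ne hia hib])]
    simp [flipMat, c1, c2]
  · rw [if_neg h]
    by_cases h1 : f a = g b ∧ f b = g a
    · rw [flipMat]; rw [if_pos h1, one_mul, if_neg]
      intro H
      apply h
      funext i
      by_cases ia : i = a
      · subst ia; simp [h1.1]
      · by_cases ib : i = b
        · subst ib; simp [h1.2]
        · simp [Equiv.swap_apply_of_ne_of_ne ia ib, H i ia ib]
    · rw [flipMat]; rw [if_neg h1, zero_mul]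

end FopAux

namespace FopAux

variable {N n : ℕ}

lemma op2_mul (X Y : End2 N) (a b : Fin n) (hab : a ≠ b) :
    op2 N n (X * Y) a b = op2 N n X a b * op2 N n Y a b := by
  ext f g
  set e : Fin N × Fin N → (Fin n → Fin N) :=
    fun p => Function.update (Function.update f a p.1) b p.2 with he
  have he1 : ∀ p : Fin N × Fin N, e p a = p.1 := fun p => by
    simp [he, Function.update_of_ne hab]
  have he2 : ∀ p : Fin N × Fin N, e p b = p.2 := fun p => by simp [he]
  have he3 : ∀ (p : Fin N × Fin N) i, i ≠ a → i ≠ b → e p i = f i := fun p i hia hib => by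
    simp [he, Function.update_of_ne hib, Function.update_of_ne hia]
  have hinj : Function.Injective e := by
    intro p q hpq
    have h1 := congrFun hpq a
    have h2 := congrFun hpq b
    rw [he1, he1] at h1
    rw [he2, he2] at h2
    exact Prod.ext h1 h2
  rw [Matrix.mul_apply]
  rw [← Finset.sum_subset (Finset.subset_univ (Finset.univ.image e))]
  · rw [Finset.sum_image (fun p _ q _ h => hinj h)]
    rw [op2_apply, Matrix.mul_apply, Finset.sum_mul]
    refine Finset.sum_congr rfl fun p _ => ?_
    rw [op2_apply, op2_apply, he1, he2]
    have d1 : (if ∀ i, i ≠ a → i ≠ b → f i = e p i then (1:ℂ) else 0) = 1 :=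
      if_pos fun i hia hib => (he3 p i hia hib).symm
    have d2 : (if ∀ i, i ≠ a → i ≠ b → e p i = g i then (1:ℂ) else 0)
        = (if ∀ i, i ≠ a → i ≠ b → f i = g i then (1:ℂ) else 0) := by
      refine if_congr ⟨fun H i hia hib => ?_, fun H i hia hib => ?_⟩ rfl rfl
      · rw [← he3 p i hia hib]; exact H i hia hib
      · rw [he3 p i hia hib]; exact H i hia hib
    rw [d1, d2]
    ring
  · intro h _ hh
    by_cases hd : ∀ i, i ≠ a → i ≠ b → f i = h i
    · exfalso
      apply hh
      refine Finset.mem_image.mpr ⟨(h a, h b), Finset.mem_univ _, ?_⟩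
      funext i
      by_cases hia : i = a
      · subst hia; exact he1 _
      · by_cases hib : i = b
        · subst hib; exact he2 _
        · rw [he3 _ i hia hib, hd i hia hib]
    · rw [op2_apply, if_neg hd]
      simp

lemma op2_mul_apply_disjoint (X Y : End2 N) (a b a' b' : Fin n)
    (hab : a ≠ b) (haa : a ≠ a') (hab' : a ≠ b') (hba : b ≠ a') (hbb : b ≠ b')
    (f g : Fin n → Fin N) :
    (op2 N n X a b * op2 N n Y a' b') f g =
      X (f a, f b) (g a, g b) * Y (f a', f b') (g a', g b') *
      (if ∀ i, i ≠ a → i ≠ b → i ≠ a' → i ≠ b' → f i = g i then 1 else 0) := by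
  rw [Matrix.mul_apply]
  set h₀ : Fin n → Fin N := Function.update (Function.update f a (g a)) b (g b) with hh0
  have k1 : h₀ a = g a := by simp [hh0, Function.update_of_ne hab]
  have k2 : h₀ b = g b := by simp [hh0]
  have k3 : ∀ i, i ≠ a → i ≠ b → h₀ i = f i := fun i hia hib => by
    simp [hh0, Function.update_of_ne hib, Function.update_of_ne hia]
  rw [Finset.sum_eq_single h₀]
  · rw [op2_apply, op2_apply, k1, k2, k3 a' haa.symm hba.symm, k3 b' hab'.symm hbb.symm]
    have d1 : (if ∀ i, i ≠ a → i ≠ b → f i = h₀ i then (1:ℂ) else 0) = 1 :=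
      if_pos fun i hia hib => (k3 i hia hib).symm
    have d2 : (if ∀ i, i ≠ a' → i ≠ b' → h₀ i = g i then (1:ℂ) else 0)
        = (if ∀ i, i ≠ a → i ≠ b → i ≠ a' → i ≠ b' → f i = g i then (1:ℂ) else 0) := by
      refine if_congr ⟨fun H i hia hib hia' hib' => ?_, fun H i hia' hib' => ?_⟩ rfl rfl
      · rw [← k3 i hia hib]; exact H i hia' hib'
      · by_cases hia : i = a
        · subst hia; exact k1
        · by_cases hib : i = b
          · subst hib; exact k2
          · rw [k3 i hia hib]; exact H i hia hib hia' hib'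
    rw [d1, d2]
    ring
  · intro h _ hne
    by_cases c1 : ∀ i, i ≠ a → i ≠ b → f i = h i
    · by_cases c2 : ∀ i, i ≠ a' → i ≠ b' → h i = g i
      · exfalso
        apply hne
        funext i
        by_cases hia : i = a
        · rw [hia, k1]; exact c2 a haa hab'
        · by_cases hib : i = b
          · rw [hib, k2]; exact c2 b hba hbb
          · rw [k3 i hia hib, c1 i hia hib]
      · rw [op2_apply Y a' b' h g, if_neg c2]
        simp
    · rw [op2_apply X a b f h, if_neg c1]
      simp
  · simp

lemma op2_commute_disjoint (X Y : End2 N) (a b a' b' : Fin n)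
    (hab : a ≠ b) (hab2 : a' ≠ b') (haa : a ≠ a') (hab' : a ≠ b') (hba : b ≠ a') (hbb : b ≠ b') :
    Commute (op2 N n X a b) (op2 N n Y a' b') := by
  unfold Commute SemiconjBy
  ext f g
  rw [op2_mul_apply_disjoint X Y a b a' b' hab haa hab' hba hbb,
      op2_mul_apply_disjoint Y X a' b' a b hab2 haa.symm hba.symm hab'.symm hbb.symm]
  have : (if ∀ i, i ≠ a' → i ≠ b' → i ≠ a → i ≠ b → f i = g i then (1:ℂ) else 0)
      = (if ∀ i, i ≠ a → i ≠ b → i ≠ a' → i ≠ b' → f i = g i then (1:ℂ) else 0) := by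
    refine if_congr ⟨fun H i h1 h2 h3 h4 => H i h3 h4 h1 h2,
      fun H i h1 h2 h3 h4 => H i h3 h4 h1 h2⟩ rfl rfl
  rw [this]
  ring

end FopAux

namespace FopAux

variable {N n : ℕ}

/-- `fin k` : the element `k` of `Fin n` (for `k < n`). -/
def fin (n : ℕ) [NeZero n] (k : ℕ) : Fin n :=
  ⟨k % n, Nat.mod_lt _ (Nat.pos_of_ne_zero (NeZero.ne n))⟩

lemma fin_val [NeZero n] {k : ℕ} (h : k < n) : (fin n k).val = k := Nat.mod_eq_of_lt h

lemma fin_eq_mk [NeZero n] {k : ℕ} (h : k < n) : fin n k = ⟨k, h⟩ := Fin.ext (fin_val h)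

noncomputable def fac (N : ℕ) (R : ℂ → End2 N) {n : ℕ} (t : ℂ × Fin n × Fin n) : EndT N n :=
  op2 N n (R t.1) t.2.1 t.2.2

noncomputable def hfac (N : ℕ) (R : ℂ → End2 N) {n : ℕ} (t : ℂ × Fin n × Fin n) : EndT N n :=
  op2 N n (R t.1 * flipMat N) t.2.1 t.2.2

noncomputable def prodR (N : ℕ) (R : ℂ → End2 N) {n : ℕ} (L : List (ℂ × Fin n × Fin n)) : EndT N n :=
  (L.map (fac N R)).prod

variable (R : ℂ → End2 N)

lemma prodR_nil : prodR N R ([] : List (ℂ × Fin n × Fin n)) = 1 := rfl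

lemma prodR_cons (t : ℂ × Fin n × Fin n) (L : List (ℂ × Fin n × Fin n)) :
    prodR N R (t :: L) = fac N R t * prodR N R L := by
  simp [prodR]

lemma prodR_append (L₁ L₂ : List (ℂ × Fin n × Fin n)) :
    prodR N R (L₁ ++ L₂) = prodR N R L₁ * prodR N R L₂ := by
  simp [prodR]

lemma prodR_flatMap {ι : Type*} (l : List ι) (f : ι → List (ℂ × Fin n × Fin n)) :
    prodR N R (l.flatMap f) = (l.map (fun i => prodR N R (f i))).prod := by
  induction l with
  | nil => simp [prodR]
  | cons a l ih => simp [List.flatMap_cons, prodR_append, ih]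

lemma hfac_eq (t : ℂ × Fin n × Fin n) (h : t.2.1 ≠ t.2.2) :
    hfac N R t = fac N R t * permMat N n (Equiv.swap t.2.1 t.2.2) := by
  rw [hfac, fac, op2_mul _ _ _ _ h, op2_flip _ _ h]

lemma permMat_fac (σ : Equiv.Perm (Fin n)) (t : ℂ × Fin n × Fin n) :
    permMat N n σ * fac N R t = fac N R (t.1, σ.symm t.2.1, σ.symm t.2.2) * permMat N n σ := by
  have h := op2_mul_permMat (N := N) (R t.1) (σ.symm t.2.1) (σ.symm t.2.2) σ
  rw [Equiv.apply_symm_apply, Equiv.apply_symm_apply] at h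
  exact h.symm

lemma perm_push (σ : Equiv.Perm (Fin n)) (L : List (ℂ × Fin n × Fin n)) :
    permMat N n σ * prodR N R L
      = prodR N R (L.map (fun t => (t.1, σ.symm t.2.1, σ.symm t.2.2))) * permMat N n σ := by
  induction L with
  | nil => simp [prodR]
  | cons t L ih =>
    rw [List.map_cons, prodR_cons, prodR_cons, ← mul_assoc, permMat_fac, mul_assoc, ih,
      ← mul_assoc]

/-- Interchange lemma. -/
lemma prod_interchange {M ι : Type*} [Monoid M] (l : List ι) (A B : ι → M)
    (h : l.Pairwise (fun i k => Commute (B i) (A k))) :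
    (l.map (fun i => A i * B i)).prod = (l.map A).prod * (l.map B).prod := by
  induction l with
  | nil => simp
  | cons a l ih =>
    rw [List.pairwise_cons] at h
    have hc : Commute (B a) ((l.map A).prod) := by
      apply Commute.list_prod_right
      intro y hy
      obtain ⟨i, hi, rfl⟩ := List.mem_map.mp hy
      exact h.1 i hi
    simp only [List.map_cons, List.prod_cons]
    rw [ih h.2, ← mul_assoc, mul_assoc (A a), hc.eq, ← mul_assoc, mul_assoc]

end FopAux

namespace FopAux

variable {N n : ℕ} (R : ℂ → End2 N)

section lists
variable [NeZero n] (c : Fin n → ℂ)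

def colL (m : ℕ) : List (ℂ × Fin n × Fin n) :=
  (List.range m).map (fun j => (c (fin n j) - c (fin n m), fin n j, fin n m))

def colexL (k : ℕ) : List (ℂ × Fin n × Fin n) :=
  (List.range k).flatMap (fun m => colL c (m+1))

def rowL (i m : ℕ) : List (ℂ × Fin n × Fin n) :=
  ((List.range m).filter (fun j => i < j)).map
    (fun j => (c (fin n i) - c (fin n j), fin n i, fin n j))

def lexL (m : ℕ) : List (ℂ × Fin n × Fin n) :=
  (List.range m).flatMap (fun i => rowL c i m)

lemma colexL_succ (k : ℕ) : colexL c (k+1) = colexL c k ++ colL c (k+1) := by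
  simp [colexL, List.range_succ]

lemma fin_ne {k l : ℕ} (hk : k < n) (hl : l < n) (hne : k ≠ l) : fin n k ≠ fin n l := by
  intro h
  apply hne
  have := congrArg Fin.val h
  rwa [fin_val hk, fin_val hl] at this

lemma lex_eq_colex (m : ℕ) (hm : m + 1 ≤ n) :
    prodR N R (lexL c (m+1)) = prodR N R (colexL c m) := by
  induction m with
  | zero =>
    simp [lexL, rowL, colexL, prodR, List.range_succ, List.range_zero]
  | succ m ih =>
    have hm' : m + 1 ≤ n := by omega
    -- last row is empty
    have hrow_last : rowL c (m+1) (m+2) = [] := by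
      simp only [rowL, List.map_eq_nil_iff, List.filter_eq_nil_iff]
      intro j hj
      simp only [List.mem_range] at hj
      simp
      omega
    have ha : lexL c (m+2) = (List.range (m+1)).flatMap (fun i => rowL c i (m+2)) := by
      rw [lexL, List.range_succ, List.flatMap_append, List.flatMap_singleton, hrow_last,
        List.append_nil]
    have hb : ∀ i, i ≤ m → rowL c i (m+2)
        = rowL c i (m+1) ++ [(c (fin n i) - c (fin n (m+1)), fin n i, fin n (m+1))] := by
      intro i hi
      rw [rowL, rowL, List.range_succ, List.filter_append, List.map_append]
      congr 1
      simp [hi, Nat.lt_succ_of_le hi]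
    rw [ha, prodR_flatMap]
    have hc : (List.range (m+1)).map (fun i => prodR N R (rowL c i (m+2)))
        = (List.range (m+1)).map (fun i => prodR N R (rowL c i (m+1)) *
            fac N R (c (fin n i) - c (fin n (m+1)), fin n i, fin n (m+1))) := by
      apply List.map_congr_left
      intro i hi
      rw [hb i (by simpa using Nat.lt_succ_iff.mp (List.mem_range.mp hi)), prodR_append]
      simp [prodR]
    rw [hc, prod_interchange]
    · rw [← prodR_flatMap, ← lexL, ih hm', colexL_succ, prodR_append]
      congr 1
      simp only [prodR, colL, List.map_map]
      rfl
    · -- pairwise commutation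
      refine List.Pairwise.imp_of_mem ?_ (List.pairwise_lt_range (n := m+1))
      intro i k hi hk hik
      rw [List.mem_range] at hi hk
      apply Commute.list_prod_right
      intro y hy
      simp only [prodR, rowL, List.map_map, List.mem_map] at hy
      obtain ⟨j, hj, rfl⟩ := hy
      rw [List.mem_filter, List.mem_range] at hj
      have hkj : k < j := by simpa using hj.2
      have hjm : j < m + 1 := hj.1
      apply op2_commute_disjoint
      · exact fin_ne (by omega) (by omega) (by omega)
      · exact fin_ne (by omega) (by omega) (by omega)
      · exact fin_ne (by omega) (by omega) (by omega)
      · exact fin_ne (by omega) (by omega) (by omega)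
      · exact fin_ne (by omega) (by omega) (by omega)
      · exact fin_ne (by omega) (by omega) (by omega)

end lists
end FopAux

namespace FopAux

variable {N n : ℕ}

def tf (m j x : ℕ) : ℕ :=
  if x < j then m + 1 - x else if x ≤ m then m - x else if x = m + 1 then m + 1 - j else x

def tg (m j y : ℕ) : ℕ :=
  if y + j ≤ m then m - y
  else if y = m + 1 - j then m + 1
  else if y ≤ m + 1 then m + 1 - y else y

lemma tf_lt {m x : ℕ} (j : ℕ) (hm : m + 1 < n) (hx : x < n) : tf m j x < n := by
  unfold tf; split_ifs <;> omega

lemma tg_lt {m y : ℕ} (j : ℕ) (hm : m + 1 < n) (hy : y < n) : tg m j y < n := by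
  unfold tg; split_ifs <;> omega

lemma tg_tf {m j : ℕ} (hj : j ≤ m + 1) (x : ℕ) : tg m j (tf m j x) = x := by
  unfold tf tg; split_ifs <;> omega

lemma tf_tg {m j : ℕ} (hj : j ≤ m + 1) (y : ℕ) : tf m j (tg m j y) = y := by
  unfold tf tg; split_ifs <;> omega

def tauE (m j : ℕ) (hm : m + 1 < n) (hj : j ≤ m + 1) : Equiv.Perm (Fin n) where
  toFun x := ⟨tf m j x.1, tf_lt j hm x.isLt⟩
  invFun y := ⟨tg m j y.1, tg_lt j hm y.isLt⟩
  left_inv x := Fin.ext (tg_tf hj x.1)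
  right_inv y := Fin.ext (tf_tg hj y.1)

def rf (m x : ℕ) : ℕ := if x ≤ m then m - x else x

lemma rf_lt {m x : ℕ} (hm : m < n) (hx : x < n) : rf m x < n := by
  unfold rf; split_ifs <;> omega

lemma rf_rf (m x : ℕ) : rf m (rf m x) = x := by
  unfold rf; split_ifs <;> omega

def revLow (m : ℕ) (hm : m < n) : Equiv.Perm (Fin n) where
  toFun x := ⟨rf m x.1, rf_lt hm x.isLt⟩
  invFun x := ⟨rf m x.1, rf_lt hm x.isLt⟩
  left_inv x := Fin.ext (rf_rf m x.1)
  right_inv x := Fin.ext (rf_rf m x.1)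

lemma revLow_zero (h : 0 < n) : revLow 0 h = Equiv.refl (Fin n) := by
  apply Equiv.ext; intro x
  apply Fin.ext
  simp only [revLow, Equiv.coe_fn_mk, Equiv.refl_apply, rf]
  split_ifs <;> omega

lemma tauE_zero (m : ℕ) (hm : m + 1 < n) :
    tauE m 0 hm (by omega) = revLow m (by omega) := by
  apply Equiv.ext; intro x
  apply Fin.ext
  simp only [tauE, revLow, Equiv.coe_fn_mk, tf, rf]
  split_ifs <;> omega

lemma tauE_last (m : ℕ) (hm : m + 1 < n) :
    tauE m (m+1) hm (le_refl _) = revLow (m+1) hm := by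
  apply Equiv.ext; intro x
  apply Fin.ext
  simp only [tauE, revLow, Equiv.coe_fn_mk, tf, rf]
  split_ifs <;> omega

lemma tauE_succ [NeZero n] (m j : ℕ) (hm : m + 1 < n) (hj : j ≤ m) :
    (tauE m j hm (by omega)).trans (Equiv.swap (fin n (m-j)) (fin n (m-j+1)))
      = tauE m (j+1) hm (by omega) := by
  have h1 : (fin n (m-j)).val = m - j := fin_val (by omega)
  have h2 : (fin n (m-j+1)).val = m - j + 1 := fin_val (by omega)
  apply Equiv.ext; intro x
  apply Fin.ext
  simp only [Equiv.trans_apply, Equiv.swap_apply_def, tauE, Equiv.coe_fn_mk, Fin.ext_iff,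
    Fin.val_mk, apply_ite Fin.val, h1, h2]
  simp only [tf]
  split_ifs <;> omega

lemma tauE_symm_1 [NeZero n] (m j : ℕ) (hm : m + 1 < n) (hj : j ≤ m) :
    (tauE m j hm (by omega)).symm (fin n (m-j)) = fin n j := by
  apply Fin.ext
  have h1 : (fin n (m-j)).val = m - j := fin_val (by omega)
  have h2 : (fin n j).val = j := fin_val (by omega)
  simp only [tauE, Equiv.symm, Equiv.coe_fn_mk, h1, h2]
  simp only [tg]
  split_ifs <;> omega

lemma tauE_symm_2 [NeZero n] (m j : ℕ) (hm : m + 1 < n) (hj : j ≤ m) :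
    (tauE m j hm (by omega)).symm (fin n (m-j+1)) = fin n (m+1) := by
  apply Fin.ext
  have h1 : (fin n (m-j+1)).val = m - j + 1 := fin_val (by omega)
  have h2 : (fin n (m+1)).val = m + 1 := fin_val (by omega)
  simp only [tauE, Equiv.symm, Equiv.coe_fn_mk, h1, h2]
  simp only [tg]
  split_ifs <;> omega

lemma revLow_trans_rev (hn : 0 < n) :
    (revLow (n-1) (by omega)).trans (Fin.revPerm (n := n)) = Equiv.refl (Fin n) := by
  apply Equiv.ext; intro x
  apply Fin.ext
  have hx := x.isLt
  simp only [Equiv.trans_apply, revLow, Equiv.coe_fn_mk, Fin.revPerm_apply, Fin.val_rev,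
    Equiv.refl_apply, rf]
  split_ifs <;> omega

end FopAux

namespace FopAux

variable {N n : ℕ} (R : ℂ → End2 N)

section hat
variable [NeZero n] (c : Fin n → ℂ)

/-- The `j`-th factor data of the `m`-th hat group. -/
def ent (m j : ℕ) : ℂ × Fin n × Fin n :=
  (c (fin n j) - c (fin n (m+1)), fin n (m-j), fin n (m-j+1))

/-- The `j`-th factor data of the `(m+1)`-st column. -/
def centr (m j : ℕ) : ℂ × Fin n × Fin n :=
  (c (fin n j) - c (fin n (m+1)), fin n j, fin n (m+1))

noncomputable def hatProd (k : ℕ) : EndT N n :=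
  ((List.range k).map (fun m => (((List.range (m+1)).map (ent c m)).map (hfac N R)).prod)).prod

lemma claimQ (m : ℕ) (hm : m + 1 < n) (j : ℕ) (hj : j ≤ m + 1) :
    permMat N n (revLow m (by omega)) * (((List.range j).map (ent c m)).map (hfac N R)).prod
      = prodR N R ((List.range j).map (centr c m)) * permMat N n (tauE m j hm hj) := by
  induction j with
  | zero =>
    simp only [List.range_zero, List.map_nil, List.prod_nil, mul_one, prodR_nil, one_mul]
    rw [← tauE_zero m hm]
  | succ j ihj =>
    have hjm : j ≤ m := by omega
    rw [List.range_succ]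
    simp only [List.map_append]
    rw [List.prod_append, prodR_append, ← mul_assoc, ihj (by omega)]
    simp only [List.map_cons, List.map_nil, List.prod_cons, List.prod_nil, mul_one]
    have hne : (ent c m j).2.1 ≠ (ent c m j).2.2 := by
      simp only [ent]
      exact fin_ne (by omega) (by omega) (by omega)
    rw [hfac_eq R _ hne]
    have hent : (ent c m j).1 = c (fin n j) - c (fin n (m+1)) := rfl
    rw [mul_assoc, ← mul_assoc (permMat N n (tauE m j hm (by omega))), permMat_fac]
    simp only [ent]
    rw [tauE_symm_1 m j hm hjm, tauE_symm_2 m j hm hjm]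
    rw [mul_assoc, mul_assoc, permMat_mul, tauE_succ m j hm hjm]
    rw [prodR_cons, prodR_nil, mul_one]
    rfl

lemma claimP (m : ℕ) (hm : m < n) :
    hatProd R c m = prodR N R (colexL c m) * permMat N n (revLow m hm) := by
  induction m with
  | zero =>
    simp only [hatProd, List.range_zero, List.map_nil, List.prod_nil, colexL, List.flatMap_nil,
      prodR_nil, one_mul, revLow_zero (by omega : 0 < n), permMat_refl]
  | succ m ih =>
    have hm' : m + 1 < n := hm
    rw [hatProd, List.range_succ, List.map_append, List.prod_append]
    simp only [List.map_cons, List.map_nil, List.prod_cons, List.prod_nil, mul_one]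
    rw [← hatProd, ih (by omega), mul_assoc]
    rw [claimQ R c m hm' (m+1) (le_refl _), tauE_last m hm']
    rw [colexL_succ, prodR_append, ← mul_assoc]
    congr 2

end hat
end FopAux

namespace FopAux

variable {N n : ℕ} (R : ℂ → End2 N)

lemma fin_val_eq [NeZero n] (j : Fin n) : fin n j.val = j := Fin.ext (fin_val j.isLt)

lemma Fop_eq_lexL [NeZero n] (c : Fin n → ℂ) : Fop N R c = prodR N R (lexL c n) := by
  rw [Fop, prodR, lexL, lexPairs]
  congr 1
  rw [show List.range n = (List.finRange n).map Fin.val from List.map_coe_finRange_eq_range.symm]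
  rw [List.flatMap_map]
  simp only [List.map_flatMap]
  apply List.flatMap_congr
  intro i _
  rw [List.map_map]
  conv_rhs =>
    rw [rowL, List.map_map,
      show List.range n = (List.finRange n).map Fin.val from List.map_coe_finRange_eq_range.symm,
      List.filter_map, List.map_map]
  have hq : (List.finRange n).filter (fun j => decide (i < j))
      = (List.finRange n).filter ((fun j => decide (i.val < j)) ∘ Fin.val) := by
    apply List.filter_congr
    intro j _
    simp only [Function.comp_apply]
    exact decide_eq_decide.mpr Fin.lt_def
  rw [hq]
  apply List.map_congr_left
  intro j hj
  simp only [Function.comp_apply, fac, fin_val_eq]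

end FopAux

namespace FopAux

variable {N n : ℕ} (R : ℂ → End2 N)

lemma hat_bridge [NeZero n] (c : Fin n → ℂ) :
    (((List.finRange (n - 1)).map fun i =>
      ((List.finRange (i.val + 1)).map fun j =>
        op2 N n
          (R (c ⟨j.val, by have := i.isLt; have := j.isLt; omega⟩ -
              c ⟨i.val + 1, by have := i.isLt; omega⟩) * flipMat N)
          ⟨i.val - j.val, by have := i.isLt; omega⟩
          ⟨i.val - j.val + 1, by have := i.isLt; omega⟩).prod).prod)
      = hatProd R c (n-1) := by
  rw [hatProd]
  rw [show List.range (n-1) = (List.finRange (n-1)).map Fin.val from List.map_coe_finRange_eq_range.symm]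
  rw [List.map_map]
  congr 1
  apply List.map_congr_left
  intro i _
  simp only [Function.comp_apply]
  rw [List.map_map]
  rw [show List.range (i.val+1) = (List.finRange (i.val+1)).map Fin.val from
    List.map_coe_finRange_eq_range.symm]
  rw [List.map_map]
  congr 1
  apply List.map_congr_left
  intro j _
  have hi := i.isLt
  have hj := j.isLt
  simp only [Function.comp_apply, hfac, ent,
    fin_eq_mk (show j.val < n by omega),
    fin_eq_mk (show i.val + 1 < n by omega),
    fin_eq_mk (show i.val - j.val < n by omega),
    fin_eq_mk (show i.val - j.val + 1 < n by omega)]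

end FopAux

/-- Alternative formula for `F(c)` in terms of `R̂(u) := R(u)P`:
`F(c) = [ ∏→_{i=1..n−1} R̂_{i,i+1}(c_1−c_{i+1}) ⋯ R̂_{2,3}(c_{i−1}−c_{i+1}) R̂_{1,2}(c_i−c_{i+1}) ] · P_{w_n}`,
where inside the `i`-th group the `j`-th factor (`j = 1,…,i`) is
`R̂_{i+1−j, i+2−j}(c_j − c_{i+1})` and `w_n` is the longest element of `S_n`. -/
theorem Fop_hat_formula
    (N : ℕ) (R : ℂ → End2 N) (hR : YangBaxter N R)
    (n : ℕ) (hn : 2 ≤ n) (c : Fin n → ℂ) :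
    Fop N R c =
    (((List.finRange (n - 1)).map fun i =>
      ((List.finRange (i.val + 1)).map fun j =>
        op2 N n
          (R (c ⟨j.val, by have := i.isLt; have := j.isLt; omega⟩ -
              c ⟨i.val + 1, by have := i.isLt; omega⟩) * flipMat N)
          ⟨i.val - j.val, by have := i.isLt; omega⟩
          ⟨i.val - j.val + 1, by have := i.isLt; omega⟩).prod).prod) *
    permMat N n Fin.revPerm := by
  haveI : NeZero n := ⟨by omega⟩
  rw [FopAux.hat_bridge R c, FopAux.claimP R c (n-1) (by omega), FopAux.Fop_eq_lexL R c]
  rw [mul_assoc, FopAux.permMat_mul, FopAux.revLow_trans_rev (by omega), FopAux.permMat_refl,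
    mul_one]
  have h := FopAux.lex_eq_colex (R := R) c (n-1) (by omega)
  rwa [show n - 1 + 1 = n by omega] at h
end
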